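/- arXiv:math/0107052 — 3 statements merged into one kernel-verified Lean document; each statement's English description precedes it below -/
import Mathlib

section
/- Let Δ be a multisegment listed in right order as (a₁,b₁), …, (a_m,b_m), and fix j ∈ ℤ. Assign to segment k a '−' if b_k = j, a '+' if b_k = j−1, and a blank otherwise; apply signature cancellation. If there is an uncanceled '−', coming from segment (a_s, j), define E_j(Δ) = Δ ∪ {(a_s, j−1)} ∖ {(a_s, j)} (deleting the segment entirely if a_s = j, i.e., replacing it with the empty segment convention). Then E_j(Δ), when nonzero, is again a multisegment, and applying E_j strictly decreases the total size n(Δ) = Σ (b_k − a_k + 1) by exactly 1. -/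
/-- Weak right order on segments `(i,j)` (`i ≤ j`): `s ⩾ t` iff `s.1 > t.1`, or
`s.1 = t.1` and `s.2 ≤ t.2`. -/
def rGE (s t : ℤ × ℤ) : Prop := t.1 < s.1 ∨ (s.1 = t.1 ∧ s.2 ≤ t.2)

instance : DecidableRel rGE := fun _ _ => by unfold rGE; infer_instance

/-- Signature reduction for the `j`-signature of a list of segments (in right order):
a segment ending in `j` is a `-`, a segment ending in `j-1` is a `+`, all others are blank;
adjacent `-+` pairs cancel.  Returns the list of segments carrying uncanceled symbols,
which has the form `+ ⋯ + - ⋯ -`. -/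
def redSeg (j : ℤ) : List (ℤ × ℤ) → List (ℤ × ℤ)
  | [] => []
  | s :: xs =>
    let r := redSeg j xs
    if s.2 = j then
      match r with
      | t :: r' => if t.2 = j - 1 then r' else s :: r
      | [] => [s]
    else if s.2 = j - 1 then s :: r
    else r

/-- `n(Δ)`: the total number of boxes of a multisegment. -/
def nOf (Δ : List (ℤ × ℤ)) : ℤ := (Δ.map (fun s => s.2 - s.1 + 1)).sum

/-- The crystal operator `E_j` on a multisegment listed in right order: replace the segment
`(a, j)` carrying the leftmost uncanceled `-` by `(a, j-1)` (deleting it if `a = j`),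
or return `none` if there is no uncanceled `-`. -/
def Ej (j : ℤ) (Δ : List (ℤ × ℤ)) : Option (List (ℤ × ℤ)) :=
  match (redSeg j Δ).find? (fun s => s.2 == j) with
  | none => none
  | some s => some ((Δ.erase s) ++ (if s.1 ≤ j - 1 then [(s.1, j - 1)] else []))

/-- Sort a multisegment into right order. -/
def rsort (Δ : List (ℤ × ℤ)) : List (ℤ × ℤ) :=
  Δ.mergeSort (fun s t => decide (rGE s t))

/-- `ε_j(Δ)`: the number of uncanceled `-` symbols of the `j`-signature of `Δ` in right order. -/
def epsj (j : ℤ) (Δ : List (ℤ × ℤ)) : ℕ :=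
  ((redSeg j (rsort Δ)).filter (fun s => s.2 == j)).length

/-- `E_j` applied to a multisegment (first putting it into right order). -/
def Ejm (j : ℤ) (Δ : List (ℤ × ℤ)) : Option (List (ℤ × ℤ)) := Ej j (rsort Δ)

/-- Iterates of `E_j`; `none` is the formal symbol `0`. -/
def EjPow (j : ℤ) : ℕ → List (ℤ × ℤ) → Option (List (ℤ × ℤ))
  | 0, Δ => some Δ
  | n + 1, Δ => (EjPow j n Δ).bind (Ejm j)

lemma redSeg_sublist (j : ℤ) : ∀ l : List (ℤ × ℤ), (redSeg j l).Sublist l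
  | [] => List.Sublist.refl _
  | s :: xs => by
    have ih := redSeg_sublist j xs
    rw [redSeg]

    cases hr : redSeg j xs with
    | nil =>
      rw [hr] at ih
      split
      · exact (List.nil_sublist xs).cons_cons s
      · split
        · exact ih.cons_cons s
        · exact ih.trans (List.sublist_cons_self s xs)
    | cons t r' =>
      rw [hr] at ih
      split
      · split
        · rename_i heq
          injection heq with h1 h2
          subst h1; subst h2
          split
          · exact ((List.sublist_cons_self t r').trans ih).trans (List.sublist_cons_self s xs)
          · exact ih.cons_cons s
        · exact (List.nil_sublist xs).cons_cons s
      · split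
        · exact ih.cons_cons s
        · exact ih.trans (List.sublist_cons_self s xs)

lemma beq_inst (t s : ℤ × ℤ) :
    @BEq.beq _ instBEqProd t s = @BEq.beq _ instBEqOfDecidableEq t s := by
  by_cases h : t = s
  · subst h
    rw [show @BEq.beq _ instBEqProd t t = true from beq_self_eq_true t,
        show @BEq.beq _ instBEqOfDecidableEq t t = true from decide_eq_true rfl]
  · rw [show @BEq.beq _ instBEqProd t s = false from beq_eq_false_iff_ne.mpr h,
        show @BEq.beq _ instBEqOfDecidableEq t s = false from decide_eq_false h]

lemma erase_inst (Δ : List (ℤ × ℤ)) (s : ℤ × ℤ) :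
    @List.erase _ instBEqProd Δ s = @List.erase _ instBEqOfDecidableEq Δ s := by
  induction Δ with
  | nil => rfl
  | cons t Δ ih => rw [@List.erase_cons _ instBEqProd, @List.erase_cons _ instBEqOfDecidableEq, beq_inst, ih]

/-- For a multisegment `Δ` listed in right order, if the `j`-signature has an uncanceled
`-`, then `E_j Δ` (replacing the segment `(a, j)` of the leftmost uncanceled `-` by
`(a, j-1)`, deleting it if `a = j`) is again a multisegment, and the total size
`n(Δ) = Σ (b_k - a_k + 1)` decreases by exactly `1`. -/
theorem stmt7 (j : ℤ) (Δ : List (ℤ × ℤ)) (hseg : ∀ s ∈ Δ, s.1 ≤ s.2)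
    (hsort : Δ.Pairwise rGE) (Δ' : List (ℤ × ℤ)) (h : Ej j Δ = some Δ') :
    (∀ s ∈ Δ', s.1 ≤ s.2) ∧ nOf Δ' = nOf Δ - 1 := by
  unfold Ej at h
  cases hf : (redSeg j Δ).find? (fun s => s.2 == j) with
  | none => rw [hf] at h; simp at h
  | some s =>
    rw [hf] at h
    simp only [Option.some.injEq] at h
    have hmem : s ∈ redSeg j Δ := List.mem_of_find?_eq_some hf
    have hsj : s.2 = j := by
      have := List.find?_some hf
      simpa using this
    have hsΔ : s ∈ Δ := (redSeg_sublist j Δ).mem hmem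
    have hs12 : s.1 ≤ s.2 := hseg s hsΔ
    have hperm : List.Perm Δ (s :: Δ.erase s) := List.perm_cons_erase hsΔ
    have hnerase : nOf (Δ.erase s) = nOf Δ - (s.2 - s.1 + 1) := by
      have := hperm.map (fun t : ℤ × ℤ => t.2 - t.1 + 1)
      have hsum := this.sum_eq
      simp only [nOf, List.map_cons, List.sum_cons] at hsum ⊢
      omega
    constructor
    · intro t ht
      rw [← h] at ht
      rcases List.mem_append.mp ht with h1 | h2
      · exact hseg t ((List.erase_sublist (a := s) (l := Δ)).mem h1)
      · split at h2
        · next hle => simp at h2; subst h2; simpa using hle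
        · simp at h2
    · rw [← h]
      by_cases hle : s.1 ≤ j - 1
      · rw [if_pos hle]
        simp only [nOf, List.map_append, List.sum_append, List.map_cons, List.map_nil,
          List.sum_cons, List.sum_nil]
        have := hnerase
        simp only [nOf] at this ⊢
        omega
      · rw [if_neg hle]
        simp only [List.append_nil]
        omega
end

section
/- Let ε_j(Δ) denote the number of uncanceled − symbols in the j-signature of the multisegment Δ in right order. If E_j(Δ) ≠ 0 then ε_j(E_j(Δ)) = ε_j(Δ) − 1, and E_j^{ε_j(Δ)+1}(Δ) = 0. -/
def Pf (j : ℤ) (L : List (ℤ × ℤ)) : List (ℤ × ℤ) :=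
  (redSeg j L).filter (fun s => s.2 == j - 1)

def Mf (j : ℤ) (L : List (ℤ × ℤ)) : List (ℤ × ℤ) :=
  (redSeg j L).filter (fun s => s.2 == j)

lemma redSeg_struct (j : ℤ) (L : List (ℤ × ℤ)) :
    ∃ P M, redSeg j L = P ++ M ∧ (∀ x ∈ P, x.2 = j - 1) ∧ (∀ x ∈ M, x.2 = j) := by
  induction L with
  | nil => exact ⟨[], [], rfl, by simp, by simp⟩
  | cons s xs ih =>
    obtain ⟨P, M, hPM, hP, hM⟩ := ih
    by_cases h1 : s.2 = j
    · cases P with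
      | nil =>
        cases M with
        | nil =>
          refine ⟨[], [s], ?_, by simp, by simp [h1]⟩
          simp [redSeg, hPM, h1]
        | cons t M' =>
          have ht : t.2 = j := hM t (by simp)
          refine ⟨[], s :: t :: M', ?_, by simp, ?_⟩
          · simp only [redSeg, hPM, if_pos h1]
            simp [ht]; omega
          · intro x hx
            rcases List.mem_cons.1 hx with h | h
            · subst h; exact h1
            · exact hM x h
      | cons t P' =>
        have ht : t.2 = j - 1 := hP t (by simp)
        refine ⟨P', M, ?_, fun x hx => hP x (by simp [hx]), hM⟩
        simp only [redSeg, hPM, if_pos h1]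
        simp [ht]
    · by_cases h2 : s.2 = j - 1
      · refine ⟨s :: P, M, ?_, ?_, hM⟩
        · simp only [redSeg, if_neg h1, if_pos h2, hPM]; rfl
        · intro x hx
          rcases List.mem_cons.1 hx with h | h
          · subst h; exact h2
          · exact hP x h
      · exact ⟨P, M, by simp only [redSeg, if_neg h1, if_neg h2, hPM], hP, hM⟩

lemma red_eq (j : ℤ) (L : List (ℤ × ℤ)) :
    redSeg j L = Pf j L ++ Mf j L ∧ (∀ x ∈ Pf j L, x.2 = j - 1) ∧ (∀ x ∈ Mf j L, x.2 = j) := by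
  obtain ⟨P, M, hPM, hP, hM⟩ := redSeg_struct j L
  have hPf : Pf j L = P := by
    rw [Pf, hPM, List.filter_append, List.filter_eq_self.2, List.filter_eq_nil_iff.2, List.append_nil]
    · intro x hx; have := hM x hx; simp [this] <;> omega
    · intro x hx; simp [hP x hx]
  have hMf : Mf j L = M := by
    rw [Mf, hPM, List.filter_append, List.filter_eq_nil_iff.2, List.filter_eq_self.2, List.nil_append]
    · intro x hx; simp [hM x hx]
    · intro x hx; have := hP x hx; simp [this] <;> omega
  exact ⟨by rw [hPf, hMf, hPM], by rw [hPf]; exact hP, by rw [hMf]; exact hM⟩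

lemma cons_minus_nil {j : ℤ} {s : ℤ × ℤ} (xs : List (ℤ × ℤ)) (h1 : s.2 = j)
    (hp : Pf j xs = []) : Pf j (s :: xs) = [] ∧ Mf j (s :: xs) = s :: Mf j xs := by
  obtain ⟨heq, hPm, hMm⟩ := red_eq j xs
  rw [hp] at heq
  simp only [List.nil_append] at heq
  have hred : redSeg j (s :: xs) = s :: Mf j xs := by
    cases hMf : Mf j xs with
    | nil => rw [hMf] at heq; simp [redSeg, heq, h1]
    | cons t M' =>
      have ht : t.2 = j := hMm t (by rw [hMf]; simp)
      rw [hMf] at heq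
      simp only [redSeg, heq, if_pos h1]
      simp [ht]; omega
  constructor
  · rw [Pf, hred]
    rw [List.filter_cons_of_neg (by simp [h1] <;> omega)]
    rw [List.filter_eq_nil_iff.2]
    intro x hx; have := hMm x hx; simp [this] <;> omega
  · rw [Mf, hred, List.filter_cons_of_pos (by simp [h1])]
    congr 1
    rw [List.filter_eq_self.2]
    intro x hx; simp [hMm x hx]

lemma cons_minus_cons {j : ℤ} {s t : ℤ × ℤ} (xs : List (ℤ × ℤ)) {P' : List (ℤ × ℤ)}
    (h1 : s.2 = j) (hp : Pf j xs = t :: P') :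
    Pf j (s :: xs) = P' ∧ Mf j (s :: xs) = Mf j xs := by
  obtain ⟨heq, hPm, hMm⟩ := red_eq j xs
  rw [hp] at heq
  have ht : t.2 = j - 1 := hPm t (by rw [hp]; simp)
  have hred : redSeg j (s :: xs) = P' ++ Mf j xs := by
    simp only [redSeg, heq, List.cons_append, if_pos h1]
    simp [ht]
  constructor
  · rw [Pf, hred, List.filter_append, List.filter_eq_self.2, List.filter_eq_nil_iff.2, List.append_nil]
    · intro x hx; have := hMm x hx; simp [this] <;> omega
    · intro x hx; have := hPm x (by rw [hp]; simp [hx]); simp [this]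
  · rw [Mf, hred, List.filter_append, List.filter_eq_nil_iff.2, List.nil_append]
    · exact List.filter_eq_self.2 (fun x hx => by simp [hMm x hx])
    · intro x hx; have := hPm x (by rw [hp]; simp [hx]); simp [this] <;> omega

lemma cons_plus {j : ℤ} {s : ℤ × ℤ} (xs : List (ℤ × ℤ)) (h2 : s.2 = j - 1) :
    Pf j (s :: xs) = s :: Pf j xs ∧ Mf j (s :: xs) = Mf j xs := by
  have h1 : ¬ s.2 = j := by omega
  have hred : redSeg j (s :: xs) = s :: redSeg j xs := by
    simp [redSeg, h1, h2]
  constructor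
  · rw [Pf, hred, List.filter_cons_of_pos (by simp [h2])]; rfl
  · rw [Mf, hred, List.filter_cons_of_neg (by simp [h2] <;> omega)]; rfl

lemma cons_other {j : ℤ} {s : ℤ × ℤ} (xs : List (ℤ × ℤ)) (h1 : ¬ s.2 = j)
    (h2 : ¬ s.2 = j - 1) : Pf j (s :: xs) = Pf j xs ∧ Mf j (s :: xs) = Mf j xs := by
  have hred : redSeg j (s :: xs) = redSeg j xs := by simp [redSeg, h1, h2]
  exact ⟨by rw [Pf, hred]; rfl, by rw [Mf, hred]; rfl⟩

lemma Mf_mem_snd {j : ℤ} {L : List (ℤ × ℤ)} {x : ℤ × ℤ} (hx : x ∈ Mf j L) : x.2 = j := by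
  have := List.of_mem_filter hx
  simpa using this

lemma Mf_append (j : ℤ) (A X : List (ℤ × ℤ)) : ∃ C, Mf j (A ++ X) = C ++ Mf j X := by
  induction A with
  | nil => exact ⟨[], by simp⟩
  | cons s A ih =>
    obtain ⟨C, hC⟩ := ih
    by_cases h1 : s.2 = j
    · cases hp : Pf j (A ++ X) with
      | nil =>
        have := cons_minus_nil (A ++ X) h1 hp
        exact ⟨s :: C, by rw [List.cons_append, this.2, hC]; rfl⟩
      | cons t P' =>
        have := cons_minus_cons (A ++ X) h1 hp
        exact ⟨C, by rw [List.cons_append, this.2, hC]⟩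
    · by_cases h2 : s.2 = j - 1
      · exact ⟨C, by rw [List.cons_append, (cons_plus (A ++ X) h2).2, hC]⟩
      · exact ⟨C, by rw [List.cons_append, (cons_other (A ++ X) h1 h2).2, hC]⟩

lemma keyA (j : ℤ) (A : List (ℤ × ℤ)) : ∀ X Y : List (ℤ × ℤ), ∀ d : ℕ,
    Mf j (A ++ X) = Mf j X →
    (Pf j Y).length = (Pf j X).length + d →
    (Mf j Y).length + 1 = (Mf j X).length →
    (Pf j (A ++ Y)).length = (Pf j (A ++ X)).length + d ∧
      (Mf j (A ++ Y)).length + 1 = (Mf j (A ++ X)).length := by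
  induction A with
  | nil => intro X Y d hM hp hm; exact ⟨hp, hm⟩
  | cons s A ih =>
    intro X Y d hM hp hm
    by_cases h1 : s.2 = j
    · cases hpAX : Pf j (A ++ X) with
      | nil =>
        exfalso
        have h2 := (cons_minus_nil (A ++ X) h1 hpAX).2
        rw [List.cons_append] at hM
        rw [hM] at h2
        obtain ⟨C, hC⟩ := Mf_append j A X
        rw [hC] at h2
        have := congrArg List.length h2
        simp at this
        omega
      | cons t P' =>
        have hstep := cons_minus_cons (A ++ X) h1 hpAX
        have hMAX : Mf j (A ++ X) = Mf j X := by
          rw [List.cons_append] at hM; rw [hstep.2] at hM; exact hM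
        obtain ⟨ihp, ihm⟩ := ih X Y d hMAX hp hm
        have hlen : (Pf j (A ++ Y)).length = P'.length + 1 + d := by
          rw [ihp, hpAX]; simp
        obtain ⟨t', Q, hQ⟩ : ∃ t' Q, Pf j (A ++ Y) = t' :: Q := by
          cases hq : Pf j (A ++ Y) with
          | nil =>
            exfalso
            rw [hq] at hlen
            simp only [List.length_nil] at hlen
            omega
          | cons a b => exact ⟨a, b, rfl⟩
        have hstepY := cons_minus_cons (A ++ Y) h1 hQ
        have hQlen : Q.length + 1 = (Pf j (A ++ Y)).length := by rw [hQ]; simp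
        rw [List.cons_append, List.cons_append, hstep.1, hstep.2, hstepY.1, hstepY.2]
        exact ⟨by omega, ihm⟩
      
    · by_cases h2 : s.2 = j - 1
      · have hX := cons_plus (xs := A ++ X) (s := s) h2
        have hY := cons_plus (xs := A ++ Y) (s := s) h2
        have hMAX : Mf j (A ++ X) = Mf j X := by
          rw [List.cons_append] at hM; rw [hX.2] at hM; exact hM
        obtain ⟨ihp, ihm⟩ := ih X Y d hMAX hp hm
        rw [List.cons_append, List.cons_append, hX.1, hX.2, hY.1, hY.2]
        constructor
        · simp [ihp]; omega
        · exact ihm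
      · have hX := cons_other (xs := A ++ X) (s := s) h1 h2
        have hY := cons_other (xs := A ++ Y) (s := s) h1 h2
        have hMAX : Mf j (A ++ X) = Mf j X := by
          rw [List.cons_append] at hM; rw [hX.2] at hM; exact hM
        obtain ⟨ihp, ihm⟩ := ih X Y d hMAX hp hm
        rw [List.cons_append, List.cons_append, hX.1, hX.2, hY.1, hY.2]
        exact ⟨ihp, ihm⟩

lemma rGE_antisymm {x y : ℤ × ℤ} (h1 : rGE x y) (h2 : rGE y x) : x = y := by
  rcases x with ⟨a, b⟩; rcases y with ⟨c, d⟩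
  simp only [rGE] at h1 h2
  simp only [Prod.mk.injEq]
  omega

instance : IsAntisymm (ℤ × ℤ) rGE := ⟨fun _ _ h1 h2 => rGE_antisymm h1 h2⟩

lemma rGE_trans' (a b c : ℤ × ℤ) (h1 : rGE a b) (h2 : rGE b c) : rGE a c := by
  rcases a with ⟨a1, a2⟩; rcases b with ⟨b1, b2⟩; rcases c with ⟨c1, c2⟩
  simp only [rGE] at *
  omega

lemma rGE_total' (a b : ℤ × ℤ) : rGE a b ∨ rGE b a := by
  rcases a with ⟨a1, a2⟩; rcases b with ⟨b1, b2⟩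
  simp only [rGE]
  omega

lemma split (j : ℤ) (L : List (ℤ × ℤ)) (hs : List.Pairwise rGE L) :
    ∀ s M', Mf j L = s :: M' →
    ∃ A B, L = A ++ s :: B ∧ s ∉ A ∧ Pf j B = [] ∧ Mf j B = M' := by
  induction L with
  | nil => intro s M' h; rw [Mf] at h; simp [redSeg] at h
  | cons t xs ih =>
    intro s M' h
    have hxs : List.Pairwise rGE xs := (List.pairwise_cons.1 hs).2
    have htall : ∀ y ∈ xs, rGE t y := (List.pairwise_cons.1 hs).1
    have hs2 : s.2 = j := Mf_mem_snd (by rw [h]; exact List.mem_cons_self)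
    by_cases h1 : t.2 = j
    · cases hp : Pf j xs with
      | nil =>
        have hstep := cons_minus_nil xs h1 hp
        rw [hstep.2] at h
        obtain ⟨hts, hM⟩ : t = s ∧ Mf j xs = M' := by
          constructor
          · exact (List.cons_eq_cons.1 h).1
          · exact (List.cons_eq_cons.1 h).2
        exact ⟨[], xs, by rw [hts]; simp, by simp, hp, hM⟩
      | cons u P' =>
        have hstep := cons_minus_cons xs h1 hp
        rw [hstep.2] at h
        obtain ⟨A', B, hxse, hsA, hPfB, hMfB⟩ := ih hxs s M' h
        have hts : s ≠ t := by
          intro hst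
          have hA' : A' = [] := by
            rcases A' with _ | ⟨a, A''⟩
            · rfl
            · exfalso
              have ha1 : rGE t a := htall a (by rw [hxse]; simp)
              have ha2 : rGE a s := by
                have := List.pairwise_append.1 (by rw [← hxse]; exact hxs)
                exact this.2.2 a (by simp) s (by simp)
              rw [← hst] at ha1
              have : a = s := rGE_antisymm ha2 ha1
              exact hsA (by rw [this]; simp)
          rw [hA'] at hxse
          simp at hxse
          rw [hxse] at hp
          have := (cons_minus_nil (s := s) B hs2 hPfB).1
          rw [this] at hp
          simp at hp
        exact ⟨t :: A', B, by rw [hxse]; rfl, by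
          intro hmem
          rcases List.mem_cons.1 hmem with hh | hh
          · exact hts hh
          · exact hsA hh, hPfB, hMfB⟩
    · by_cases h2 : t.2 = j - 1
      · have hstep := cons_plus xs h2
        rw [hstep.2] at h
        obtain ⟨A', B, hxse, hsA, hPfB, hMfB⟩ := ih hxs s M' h
        refine ⟨t :: A', B, by rw [hxse]; rfl, ?_, hPfB, hMfB⟩
        intro hmem
        rcases List.mem_cons.1 hmem with hh | hh
        · rw [hh] at hs2; omega
        · exact hsA hh
      · have hstep := cons_other xs h1 h2
        rw [hstep.2] at h
        obtain ⟨A', B, hxse, hsA, hPfB, hMfB⟩ := ih hxs s M' h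
        refine ⟨t :: A', B, by rw [hxse]; rfl, ?_, hPfB, hMfB⟩
        intro hmem
        rcases List.mem_cons.1 hmem with hh | hh
        · rw [hh] at hs2; exact h1 hs2
        · exact hsA hh

lemma rsort_sorted (Δ : List (ℤ × ℤ)) : List.Pairwise rGE (rsort Δ) := by
  have h := List.pairwise_mergeSort (le := fun s t => decide (rGE s t))
    (fun a b c h1 h2 => by
      simp only [decide_eq_true_eq] at *
      exact rGE_trans' a b c h1 h2)
    (fun a b => by
      simp only [Bool.or_eq_true, decide_eq_true_eq]
      exact rGE_total' a b) Δ
  exact h.imp (fun hab => by simpa using hab)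

lemma rsort_perm (Δ : List (ℤ × ℤ)) : (rsort Δ).Perm Δ := List.mergeSort_perm Δ _

lemma rsort_eq_of_sorted {K Δ : List (ℤ × ℤ)} (hsorted : List.Pairwise rGE K)
    (hperm : Δ.Perm K) : rsort Δ = K :=
  List.Perm.eq_of_pairwise (fun _ _ _ _ h1 h2 => rGE_antisymm h1 h2) (rsort_sorted Δ) hsorted ((rsort_perm Δ).trans hperm)

lemma head?_filter {α : Type} (p : α → Bool) : ∀ l : List α, (l.filter p).head? = l.find? p := by
  intro l
  induction l with
  | nil => simp
  | cons a l ih =>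
    by_cases h : p a
    · simp [List.filter_cons, List.find?_cons, h]
    · simp only [List.filter_cons, List.find?_cons]
      simp [h, ih]

lemma epsj_eq (j : ℤ) (Δ : List (ℤ × ℤ)) : epsj j Δ = (Mf j (rsort Δ)).length := rfl

lemma ejm_some (j : ℤ) (Δ Δ' : List (ℤ × ℤ)) (h : Ejm j Δ = some Δ') :
    epsj j Δ' + 1 = epsj j Δ := by
  rw [Ejm, Ej] at h
  cases hf : (redSeg j (rsort Δ)).find? (fun s => s.2 == j) with
  | none => rw [hf] at h; simp at h
  | some s =>
    rw [hf] at h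
    simp only [Option.some.injEq] at h
    have hhead : (Mf j (rsort Δ)).head? = some s := by
      rw [Mf, head?_filter]; exact hf
    obtain ⟨M', hMfL⟩ : ∃ M', Mf j (rsort Δ) = s :: M' := by
      cases hM : Mf j (rsort Δ) with
      | nil => rw [hM] at hhead; simp at hhead
      | cons a b => rw [hM] at hhead; simp at hhead; exact ⟨b, by rw [hhead]⟩
    have hs2 : s.2 = j := Mf_mem_snd (by rw [hMfL]; exact List.mem_cons_self)
    have hLsorted : List.Pairwise rGE (rsort Δ) := rsort_sorted Δ
    obtain ⟨A, B, hL, hsA, hPfB, hMfB⟩ := split j (rsort Δ) hLsorted s M' hMfL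
    have hsplit := List.pairwise_append.1 (by rw [← hL]; exact hLsorted)
    have hAcross : ∀ x ∈ A, ∀ y ∈ s :: B, rGE x y := hsplit.2.2
    have hsB : ∀ y ∈ B, rGE s y := (List.pairwise_cons.1 hsplit.2.1).1
    have hAp : List.Pairwise rGE A := hsplit.1
    have hBp : List.Pairwise rGE B := (List.pairwise_cons.1 hsplit.2.1).2
    have herase : (rsort Δ).erase s = A ++ B := by
      rw [hL, List.erase_append_right _ hsA, List.erase_cons_head]
    have hMfX : Mf j (A ++ (s :: B)) = Mf j (s :: B) := by
      rw [← hL, hMfL, (cons_minus_nil B hs2 hPfB).2, hMfB]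
    have hepsD : epsj j Δ = (Mf j (A ++ (s :: B))).length := by
      rw [epsj_eq, hL]
    by_cases h1 : s.1 ≤ j - 1
    · rw [if_pos h1] at h
      have hΔ' : Δ' = (A ++ B) ++ [(s.1, j - 1)] := by rw [← h, herase]
      have hsortK : List.Pairwise rGE (A ++ (s.1, j - 1) :: B) := by
        rw [List.pairwise_append]
        refine ⟨hAp, List.pairwise_cons.2 ⟨?_, hBp⟩, ?_⟩
        · intro y hy
          have hsy := hsB y hy
          rcases s with ⟨a, b⟩; rcases y with ⟨c, d⟩
          simp only [rGE] at hsy ⊢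
          simp only at hs2
          omega
        · intro x hx y hy
          rcases List.mem_cons.1 hy with hh | hh
          · have hxs : rGE x s := hAcross x hx s (List.mem_cons_self)
            have hxne : x ≠ s := fun he => hsA (he ▸ hx)
            subst hh
            rcases s with ⟨a, b⟩; rcases x with ⟨c, d⟩
            simp only [rGE] at hxs ⊢
            simp only at hs2
            simp only [ne_eq, Prod.mk.injEq, not_and] at hxne
            omega
          · exact hAcross x hx y (List.mem_cons_of_mem _ hh)
      have hperm : Δ'.Perm (A ++ (s.1, j - 1) :: B) := by
        rw [hΔ', List.append_assoc]
        exact List.Perm.append_left A (List.perm_append_singleton _ _)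
      have hrs : rsort Δ' = A ++ (s.1, j - 1) :: B := rsort_eq_of_sorted hsortK hperm
      have hkey := keyA j A (s :: B) ((s.1, j - 1) :: B) 1 hMfX ?_ ?_
      · rw [epsj_eq, hrs, hepsD]
        exact hkey.2
      · rw [(cons_plus (s := ((s.1 : ℤ), j - 1)) B rfl).1, (cons_minus_nil B hs2 hPfB).1, hPfB]
        simp
      · rw [(cons_plus (s := ((s.1 : ℤ), j - 1)) B rfl).2, (cons_minus_nil B hs2 hPfB).2]
        simp
    · rw [if_neg h1] at h
      have hΔ' : Δ' = A ++ B := by rw [← h, herase]; simp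
      have hsortK : List.Pairwise rGE (A ++ B) := by
        rw [List.pairwise_append]
        exact ⟨hAp, hBp, fun x hx y hy => hAcross x hx y (List.mem_cons_of_mem _ hy)⟩
      have hrs : rsort Δ' = A ++ B := rsort_eq_of_sorted hsortK (by rw [hΔ'])
      have hkey := keyA j A (s :: B) B 0 hMfX ?_ ?_
      · rw [epsj_eq, hrs, hepsD]
        exact hkey.2
      · rw [(cons_minus_nil B hs2 hPfB).1, hPfB]
        rfl
      · rw [(cons_minus_nil B hs2 hPfB).2]
        simp

lemma ejm_none (j : ℤ) (Δ : List (ℤ × ℤ)) (h : epsj j Δ = 0) : Ejm j Δ = none := by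
  rw [Ejm, Ej]
  have hfil : (redSeg j (rsort Δ)).filter (fun s => s.2 == j) = [] :=
    List.length_eq_zero_iff.1 h
  have hfind : (redSeg j (rsort Δ)).find? (fun s => s.2 == j) = none := by
    rw [← head?_filter, hfil]; rfl
  rw [hfind]

lemma EjPow_succ (j : ℤ) (n : ℕ) (Δ : List (ℤ × ℤ)) :
    EjPow j (n + 1) Δ = (Ejm j Δ).bind (EjPow j n) := by
  induction n with
  | zero =>
    show (EjPow j 0 Δ).bind (Ejm j) = _
    cases hE : Ejm j Δ <;> simp [EjPow, hE]
  | succ n ih =>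
    show (EjPow j (n + 1) Δ).bind (Ejm j) = _
    rw [ih]
    cases hE : Ejm j Δ with
    | none => simp
    | some x => simp [EjPow]

lemma eps_iter (j : ℤ) : ∀ (n : ℕ) (Δ : List (ℤ × ℤ)), epsj j Δ = n →
    EjPow j (n + 1) Δ = none := by
  intro n
  induction n with
  | zero =>
    intro Δ h
    show (EjPow j 0 Δ).bind (Ejm j) = none
    simp [EjPow, ejm_none j Δ h]
  | succ n ih =>
    intro Δ h
    rw [EjPow_succ]
    cases hE : Ejm j Δ with
    | none => rfl
    | some Δ'' =>
      have := ejm_some j Δ Δ'' hE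
      have h2 : epsj j Δ'' = n := by omega
      simpa using ih Δ'' h2

/-- If `E_j Δ ≠ 0` then `ε_j(E_j Δ) = ε_j(Δ) - 1`, and `E_j^{ε_j(Δ)+1} Δ = 0`
(where `ε_j` counts the uncanceled `-` symbols of the `j`-signature in right order). -/
theorem stmt8 (j : ℤ) (Δ Δ' : List (ℤ × ℤ)) (hseg : ∀ s ∈ Δ, s.1 ≤ s.2)
    (h : Ejm j Δ = some Δ') :
    epsj j Δ' = epsj j Δ - 1 ∧ EjPow j (epsj j Δ + 1) Δ = none := by
  have h1 := ejm_some j Δ Δ' h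
  exact ⟨by omega, eps_iter j (epsj j Δ) Δ rfl⟩
end

section
/- The map (μ^{(1)}, …, μ^{(r)}) ↦ Δ(μ^{(1)}, i₁) ∪ ⋯ ∪ Δ(μ^{(r)}, i_r) (union of multisets) is injective on Kleshchev multipartitions colored by λ = Λ_{i₁} + ⋯ + Λ_{i_r} with i₁ ≥ ⋯ ≥ i_r. -/
/-- A partition: a weakly decreasing list of positive integers. -/
def IsPartition (μ : List ℕ) : Prop :=
  μ.Pairwise (· ≥ ·) ∧ ∀ x ∈ μ, 0 < x

/-- Remove one box from row `m` (0-indexed), deleting the row if it becomes empty. -/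
def removeBox (μ : List ℕ) (m : ℕ) : List ℕ :=
  (μ.set m (μ.getD m 0 - 1)).filter (fun x => decide (0 < x))

/-- The box at the end of row `m` (0-indexed) of `μ` colored by `i` is a removable `j`-box:
it is filled with `j` (the `(x,y)` box is filled with `i + x - y`, rows and columns 1-indexed),
and removing it yields the diagram of a partition. -/
def RemovableJBox (μ : List ℕ) (i j : ℤ) (m : ℕ) : Prop :=
  m < μ.length ∧ i + (μ.getD m 0 : ℤ) - (m + 1 : ℕ) = j ∧ IsPartition (removeBox μ m)

/-- Add a box at the end of row `m` (0-indexed); `m = μ.length` starts a new row. -/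
def addBox (μ : List ℕ) (m : ℕ) : List ℕ :=
  if m < μ.length then μ.set m (μ.getD m 0 + 1) else μ ++ [1]

/-- The position at the end of row `m` is an addable `j`-box: the added box would be filled
with `j` and adding it yields the diagram of a partition. -/
def AddableJBox (μ : List ℕ) (i j : ℤ) (m : ℕ) : Prop :=
  m ≤ μ.length ∧ i + ((μ.getD m 0 : ℤ) + 1) - (m + 1 : ℕ) = j ∧ IsPartition (addBox μ m)
/-- The multisegment `Δ(μ, i)` of a partition `μ` colored by `i`, listed in right order:
row `m` (1-indexed) gives the segment `(i - m + 1, i - m + μ_m)`. -/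
def deltaList (μ : List ℕ) (i : ℤ) : List (ℤ × ℤ) :=
  (μ.zipIdx.map Prod.swap).map (fun p => ((i - (p.1 : ℤ)), (i - (p.1 : ℤ) + (p.2 : ℤ) - 1)))

def Kleshchev (is : List ℤ) (μs : List (List ℕ)) : Prop :=
  ∀ t : ℕ, t + 1 < μs.length → ∀ x : ℕ,
    (μs.getD t []).getD ((is.getD t 0 - is.getD (t + 1) 0).toNat + x) 0
      ≤ (μs.getD (t + 1) []).getD x 0

/-- The multisegment `Δ(μ^{(1)}, i₁) ∪ ⋯ ∪ Δ(μ^{(r)}, i_r)` of a colored multipartition. -/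
def DeltaMP (is : List ℤ) (μs : List (List ℕ)) : Multiset (ℤ × ℤ) :=
  ((μs.zip is).map (fun p => (deltaList p.1 p.2 : Multiset (ℤ × ℤ)))).sum

namespace Stmt14Aux

def seglen (p : ℤ × ℤ) : ℕ := (p.2 - p.1 + 1).toNat

def G (M : Multiset (ℤ × ℤ)) (b : ℤ) : ℕ :=
  ((M.filter (fun p => p.1 = b)).map seglen).sup

lemma G_add (M N : Multiset (ℤ × ℤ)) (b : ℤ) : G (M + N) b = G M b ⊔ G N b := by
  simp [G, Multiset.filter_add, Multiset.map_add, Multiset.sup_add]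

def deltaFrom (μ : List ℕ) (i : ℤ) (n : ℕ) : List (ℤ × ℤ) :=
  ((μ.zipIdx n).map Prod.swap).map (fun p => ((i - (p.1 : ℤ)), (i - (p.1 : ℤ) + (p.2 : ℤ) - 1)))

lemma deltaList_eq_deltaFrom (μ : List ℕ) (i : ℤ) : deltaList μ i = deltaFrom μ i 0 := rfl

lemma deltaFrom_cons (x : ℕ) (μ : List ℕ) (i : ℤ) (n : ℕ) :
    deltaFrom (x :: μ) i n = (i - n, i - n + x - 1) :: deltaFrom μ i (n + 1) := by
  simp [deltaFrom, List.zipIdx_cons]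

lemma G_deltaFrom (μ : List ℕ) : ∀ (n : ℕ) (i b : ℤ),
    G (↑(deltaFrom μ i n)) b = if b ≤ i - n then μ.getD ((i - b).toNat - n) 0 else 0 := by
  induction μ with
  | nil => intro n i b; simp [deltaFrom, G]
  | cons x μ ih =>
    intro n i b
    rw [deltaFrom_cons]
    rw [show ((((i - n, i - n + x - 1) :: deltaFrom μ i (n+1) : List (ℤ × ℤ))) : Multiset (ℤ × ℤ))
        = (i - (n:ℤ), i - n + x - 1) ::ₘ ↑(deltaFrom μ i (n+1)) from rfl]
    by_cases hb : (i - (n:ℤ)) = b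
    · rw [G, Multiset.filter_cons_of_pos _ (by simpa using hb), Multiset.map_cons,
        Multiset.sup_cons]
      have h0 : G (↑(deltaFrom μ i (n+1))) b = 0 := by
        rw [ih (n+1) i b, if_neg (by omega)]
      rw [← G] at *
      rw [h0]
      have : seglen (i - (n:ℤ), i - n + x - 1) = x := by simp only [seglen]; omega
      rw [this, if_pos (by omega)]
      have : ((i : ℤ) - b).toNat - n = 0 := by omega
      rw [this]; simp
    · rw [G, Multiset.filter_cons_of_neg _ (by simpa using hb), ← G, ih (n+1) i b]
      by_cases h2 : b ≤ i - (n+1:ℕ)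
      · rw [if_pos h2, if_pos (by push_cast at h2 ⊢; omega)]
        have h3 : ((i:ℤ) - b).toNat - n = (((i:ℤ) - b).toNat - (n+1)) + 1 := by
          push_cast at h2; omega
        rw [h3, List.getD_cons_succ]
      · rw [if_neg h2, if_neg (by push_cast at h2 ⊢; omega)]

lemma G_sum (l : List (List ℕ × ℤ)) (b : ℤ) :
    G ((l.map (fun p => (deltaList p.1 p.2 : Multiset (ℤ × ℤ)))).sum) b
      = (l.map (fun p => G (↑(deltaList p.1 p.2)) b)).foldr (· ⊔ ·) 0 := by
  induction l with
  | nil => simp [G]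
  | cons p l ih => simp [G_add, ih]

lemma foldr_sup_le {l : List ℕ} {c : ℕ} (h : ∀ x ∈ l, x ≤ c) : l.foldr (· ⊔ ·) 0 ≤ c := by
  induction l with
  | nil => simp
  | cons x l ih =>
    simp only [List.foldr_cons, sup_le_iff]
    exact ⟨h x (by simp), ih fun y hy => h y (by simp [hy])⟩

lemma le_foldr_sup {l : List ℕ} {x : ℕ} (h : x ∈ l) : x ≤ l.foldr (· ⊔ ·) 0 := by
  induction l with
  | nil => simp at h
  | cons y l ih =>
    simp only [List.foldr_cons, le_sup_iff]
    rcases List.mem_cons.mp h with h | h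
    · exact Or.inl h.le
    · exact Or.inr (ih h)

lemma sorted_getD {is : List ℤ} (hdec : is.Pairwise (· ≥ ·)) {t s : ℕ} (h : t ≤ s)
    (hs : s < is.length) : is.getD s 0 ≤ is.getD t 0 := by
  rcases eq_or_lt_of_le h with rfl | h
  · exact le_refl _
  · rw [List.getD_eq_getElem _ _ hs, List.getD_eq_getElem _ _ (lt_trans h hs)]
    exact List.pairwise_iff_getElem.mp hdec t s (lt_trans h hs) hs h

lemma chain {is : List ℤ} {μs : List (List ℕ)} (hlen : μs.length = is.length)
    (hdec : is.Pairwise (· ≥ ·)) (hK : Kleshchev is μs) (b : ℤ) (t s : ℕ) (ht : t ≤ s) :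
    s < μs.length → b ≤ is.getD s 0 →
    (μs.getD t []).getD ((is.getD t 0 - b).toNat) 0
      ≤ (μs.getD s []).getD ((is.getD s 0 - b).toNat) 0 := by
  induction s, ht using Nat.le_induction with
  | base => intro _ _; exact le_refl _
  | succ s hts ih =>
    intro hs hb
    have h1 : is.getD (s+1) 0 ≤ is.getD s 0 := by
      rcases eq_or_lt_of_le (Nat.le_refl (s+1)) with _ | _
      · exact sorted_getD hdec (Nat.le_succ s) (by omega)
      · exact sorted_getD hdec (Nat.le_succ s) (by omega)
    refine le_trans (ih (by omega) (le_trans hb h1)) ?_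
    have hKs := hK s (by omega) ((is.getD (s+1) 0 - b).toNat)
    rwa [show (is.getD s 0 - is.getD (s+1) 0).toNat + (is.getD (s+1) 0 - b).toNat
        = (is.getD s 0 - b).toNat by omega] at hKs

lemma eq_of_getD : ∀ (μ ν : List ℕ), (∀ x ∈ μ, 0 < x) → (∀ x ∈ ν, 0 < x) →
    (∀ m, μ.getD m 0 = ν.getD m 0) → μ = ν := by
  intro μ
  induction μ with
  | nil =>
    intro ν _ hν h
    cases ν with
    | nil => rfl
    | cons y ν => have := h 0; simp at this; exact absurd this.symm (Nat.ne_of_gt (hν y (by simp)))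
  | cons x μ ih =>
    intro ν hμ hν h
    cases ν with
    | nil => have := h 0; simp at this; exact absurd this (Nat.ne_of_gt (hμ x (by simp)))
    | cons y ν =>
      have h0 : x = y := by have := h 0; simpa using this
      have := ih ν (fun z hz => hμ z (by simp [hz])) (fun z hz => hν z (by simp [hz]))
        (fun m => by have := h (m+1); simpa using this)
      rw [h0, this]


lemma getD_concat_length (l : List α) (x d : α) : (l ++ [x]).getD l.length d = x := by
  rw [List.getD_eq_getElem _ _ (by simp)]
  simp

lemma DeltaMP_concat {is : List ℤ} {μs : List (List ℕ)} (h : μs.length = is.length)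
    (μ : List ℕ) (a : ℤ) :
    DeltaMP (is ++ [a]) (μs ++ [μ]) = DeltaMP is μs + ↑(deltaList μ a) := by
  simp [DeltaMP, List.zip_append h]

lemma key {is : List ℤ} {μs : List (List ℕ)} {a : ℤ} {μ : List ℕ}
    (hlen : (μs ++ [μ]).length = (is ++ [a]).length)
    (hdec : (is ++ [a]).Pairwise (· ≥ ·))
    (hK : Kleshchev (is ++ [a]) (μs ++ [μ])) (m : ℕ) :
    G (DeltaMP (is ++ [a]) (μs ++ [μ])) ((a : ℤ) - m) = μ.getD m 0 := by
  have hl : μs.length = is.length := by simpa using hlen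
  set b := a - (m : ℤ) with hbdef
  set F := is ++ [a] with hF
  set Ms := μs ++ [μ] with hMs
  have hzip : Ms.zip F = μs.zip is ++ [(μ, a)] := List.zip_append hl
  have hFlen : F.length = is.length + 1 := by simp [hF]
  have hMslen : Ms.length = is.length + 1 := by simp [hMs, hl]
  have hFlast : F.getD is.length 0 = a := getD_concat_length _ _ _
  have hMlast : Ms.getD is.length [] = μ := by
    have := getD_concat_length μs μ []
    rw [hl] at this
    exact this
  rw [DeltaMP, G_sum]
  apply le_antisymm
  · apply foldr_sup_le
    intro y hy
    rw [List.mem_iff_getElem] at hy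
    obtain ⟨t, ht, rfl⟩ := hy
    have ht' : t < (Ms.zip F).length := by simpa using ht
    have htM : t < Ms.length := by rw [List.length_zip] at ht'; omega
    have htF : t < F.length := by rw [List.length_zip] at ht'; omega
    rw [List.getElem_map, List.getElem_zip, deltaList_eq_deltaFrom, G_deltaFrom]
    have haF : a ≤ F[t] := by
      have h2 := sorted_getD hdec (show t ≤ is.length by omega) (by omega)
      rw [hFlast, List.getD_eq_getElem _ _ htF] at h2
      exact h2
    rw [if_pos (by push_cast; omega)]
    have hchain := chain (is := F) (μs := Ms) hlen hdec hK b t is.length (by omega) (by omega)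
      (by rw [hFlast]; omega)
    rw [hFlast, hMlast] at hchain
    have hmeq : (a - b).toNat = m := by omega
    rw [hmeq] at hchain
    have := hchain
    rw [List.getD_eq_getElem _ _ htM, List.getD_eq_getElem _ _ htF] at this
    simpa using this
  · have hmem : G (↑(deltaList μ a)) b
        ∈ (Ms.zip F).map (fun p => G (↑(deltaList p.1 p.2)) b) := by
      rw [hzip, List.map_append]
      exact List.mem_append_right _ (by simp)
    refine le_trans (le_of_eq ?_) (le_foldr_sup hmem)
    rw [deltaList_eq_deltaFrom, G_deltaFrom, if_pos (by push_cast; omega)]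
    congr 1
    omega

lemma kleshchev_prefix {is : List ℤ} {μs : List (List ℕ)} {a : ℤ} {μ : List ℕ}
    (hl : μs.length = is.length)
    (hK : Kleshchev (is ++ [a]) (μs ++ [μ])) : Kleshchev is μs := by
  intro t ht x
  have h1 := hK t (by simp; omega) x
  rw [List.getD_append _ _ _ _ (by omega), List.getD_append _ _ _ _ (by omega),
      List.getD_append _ _ _ _ (by omega), List.getD_append _ _ _ _ (by omega)] at h1
  exact h1

lemma main : ∀ (n : ℕ) (is : List ℤ) (μs νs : List (List ℕ)),
    is.length = n → μs.length = is.length → νs.length = is.length →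
    is.Pairwise (· ≥ ·) →
    (∀ μ ∈ μs, IsPartition μ) → (∀ ν ∈ νs, IsPartition ν) →
    Kleshchev is μs → Kleshchev is νs →
    DeltaMP is μs = DeltaMP is νs → μs = νs := by
  intro n
  induction n with
  | zero =>
    intro is μs νs hn hl hl' _ _ _ _ _ _
    have h1 : μs = [] := List.length_eq_zero_iff.mp (by omega)
    have h2 : νs = [] := List.length_eq_zero_iff.mp (by omega)
    rw [h1, h2]
  | succ n ih =>
    intro is μs νs hn hl hl' hdec hpart hpart' hK hK' h
    obtain ⟨is', a, rfl⟩ : ∃ L x, is = L ++ [x] := by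
      rcases is.eq_nil_or_concat with h0 | ⟨L, x, h0⟩
      · subst h0; simp at hn
      · exact ⟨L, x, by rw [h0, List.concat_eq_append]⟩
    obtain ⟨μs', μ, rfl⟩ : ∃ L x, μs = L ++ [x] := by
      rcases μs.eq_nil_or_concat with h0 | ⟨L, x, h0⟩
      · subst h0; simp at hl
      · exact ⟨L, x, by rw [h0, List.concat_eq_append]⟩
    obtain ⟨νs', ν, rfl⟩ : ∃ L x, νs = L ++ [x] := by
      rcases νs.eq_nil_or_concat with h0 | ⟨L, x, h0⟩
      · subst h0; simp at hl'
      · exact ⟨L, x, by rw [h0, List.concat_eq_append]⟩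
    simp only [List.length_append, List.length_cons, List.length_nil] at hn hl hl'
    have hl1 : μs'.length = is'.length := by omega
    have hl2 : νs'.length = is'.length := by omega
    have hμν : μ = ν := by
      apply eq_of_getD
      · exact (hpart μ (by simp)).2
      · exact (hpart' ν (by simp)).2
      · intro m
        rw [← key (by simp [hl1]) hdec hK m, ← key (by simp [hl2]) hdec hK' m, h]
    rw [DeltaMP_concat hl1, DeltaMP_concat hl2, hμν] at h
    have h' := add_right_cancel h
    have hrec := ih is' μs' νs' (by omega) hl1 hl2
      (hdec.sublist (List.sublist_append_left _ _))
      (fun ρ hρ => hpart ρ (by simp [hρ]))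
      (fun ρ hρ => hpart' ρ (by simp [hρ]))
      (kleshchev_prefix hl1 hK) (kleshchev_prefix hl2 hK') h'
    rw [hrec, hμν]

end Stmt14Aux

/-- The map `(μ^{(1)}, …, μ^{(r)}) ↦ Δ(μ^{(1)}, i₁) ∪ ⋯ ∪ Δ(μ^{(r)}, i_r)` is injective
on Kleshchev multipartitions colored by `λ = Λ_{i₁} + ⋯ + Λ_{i_r}`, `i₁ ≥ ⋯ ≥ i_r`. -/
theorem stmt14 (is : List ℤ) (μs νs : List (List ℕ))
    (hlen : μs.length = is.length) (hlen' : νs.length = is.length)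
    (hdec : is.Pairwise (· ≥ ·))
    (hpart : ∀ μ ∈ μs, IsPartition μ) (hpart' : ∀ ν ∈ νs, IsPartition ν)
    (hK : Kleshchev is μs) (hK' : Kleshchev is νs)
    (h : DeltaMP is μs = DeltaMP is νs) : μs = νs :=
  Stmt14Aux.main is.length is μs νs rfl hlen hlen' hdec hpart hpart' hK hK' h
end
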